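/- arXiv:1403.8042 — 4 statements merged into one kernel-verified Lean document; each statement's English description precedes it below -/
import Mathlib

section
/- Let X be an exponentially distributed random variable with mean Ω > 0, let δ > 0 and P̄ > 0, and let x0 > 0 be the unique solution of (δ/Ω)·E1(x0/Ω) = P̄, where E1(z) = ∫_z^{∞}(e^{−t}/t) dt. Define P*(x) = δ/x for x ≥ x0 and P*(x) = 0 for 0 ≤ x < x0. Then E[P*(X)] = P̄, and for every measurable function P : [0,∞) → [0,∞) with E[P(X)] ≤ P̄, the outage probability satisfies Pr{P(X)·X < δ} ≥ Pr{P*(X)·X < δ} = 1 − e^{−x0/Ω}. -/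
open MeasureTheory ProbabilityTheory

/-- The exponential integral `E1(z) = ∫_z^∞ e^{-t}/t dt`. -/
noncomputable def expInt (z : ℝ) : ℝ := ∫ t in Set.Ioi z, Real.exp (-t) / t

open Real Set
open scoped ENNReal NNReal


lemma expPDF_eq : ∀ r : ℝ, exponentialPDF r = gammaPDF 1 r := fun _ => rfl

lemma expMeasure_def (r : ℝ) : expMeasure r = volume.withDensity (exponentialPDF r) := rfl

lemma integrable_aux {Ω δ x0 : ℝ} (hΩ : 0 < Ω) (hδ : 0 < δ) (hx0 : 0 < x0) :
    IntegrableOn (fun x => (1/Ω * rexp (-(1/Ω * x))) * (δ / x)) (Ioi x0) := by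
  have hr : (0:ℝ) < 1/Ω := by positivity
  have hg : IntegrableOn (fun x => (δ/(Ω*x0)) * rexp (-(1/Ω) * x)) (Ioi x0) :=
    (exp_neg_integrableOn_Ioi x0 hr).const_mul _
  refine Integrable.mono hg ?_ ?_
  · apply Measurable.aestronglyMeasurable
    fun_prop
  · rw [ae_restrict_iff' measurableSet_Ioi]
    filter_upwards with x hx
    have hxpos : 0 < x := hx0.trans hx
    rw [Real.norm_eq_abs, Real.norm_eq_abs, abs_of_nonneg (by positivity),
      abs_of_nonneg (by positivity)]
    have h1 : δ / x ≤ δ / x0 := by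
      apply div_le_div_of_nonneg_left hδ.le hx0 hx.le
    calc (1/Ω * rexp (-(1/Ω * x))) * (δ / x) ≤ (1/Ω * rexp (-(1/Ω * x))) * (δ / x0) := by
          apply mul_le_mul_of_nonneg_left h1 (by positivity)
      _ = (δ/(Ω*x0)) * rexp (-(1/Ω) * x) := by rw [neg_mul]; ring

lemma tail_integral {Ω δ Pbar x0 : ℝ} (hΩ : 0 < Ω) (hδ : 0 < δ) (hx0 : 0 < x0)
    (hx0sol : (δ / Ω) * expInt (x0 / Ω) = Pbar) :
    ∫ x in Ioi x0, (1/Ω * rexp (-(1/Ω * x))) * (δ / x) = Pbar := by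
  have h1 : ∀ x ∈ Ioi x0, (1/Ω * rexp (-(1/Ω * x))) * (δ / x)
      = (δ/Ω^2) * (rexp (-(1/Ω * x)) / (1/Ω * x)) := by
    intro x hx
    have hxpos : 0 < x := hx0.trans hx
    field_simp
  rw [setIntegral_congr_fun measurableSet_Ioi h1, MeasureTheory.integral_const_mul,
    integral_comp_mul_left_Ioi (fun t => rexp (-t) / t) x0 (by positivity : (0:ℝ) < 1/Ω)]
  have : (1/Ω) * x0 = x0 / Ω := by ring
  rw [this]
  rw [smul_eq_mul, ← expInt, ← hx0sol]
  field_simp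

lemma tail_lintegral {Ω δ Pbar x0 : ℝ} (hΩ : 0 < Ω) (hδ : 0 < δ) (hx0 : 0 < x0)
    (hx0sol : (δ / Ω) * expInt (x0 / Ω) = Pbar) :
    ∫⁻ x in Ici x0, ENNReal.ofReal (δ / x) ∂(expMeasure (1/Ω)) = ENNReal.ofReal Pbar := by
  have hpdf : exponentialPDF (1/Ω) = fun x => ENNReal.ofReal (exponentialPDFReal (1/Ω) x) := rfl
  rw [expMeasure_def, hpdf, setLIntegral_withDensity_eq_setLIntegral_mul _
    (measurable_exponentialPDFReal (1/Ω)).ennreal_ofReal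
    (by fun_prop : Measurable fun x => ENNReal.ofReal (δ / x)) measurableSet_Ici,
    ← restrict_Ioi_eq_restrict_Ici]
  have h1 : ∀ x ∈ Ioi x0, ((fun x => ENNReal.ofReal (exponentialPDFReal (1/Ω) x)) * fun x => ENNReal.ofReal (δ / x)) x
      = ENNReal.ofReal ((1/Ω * rexp (-(1/Ω * x))) * (δ / x)) := by
    intro x hx
    have hxpos : 0 < x := hx0.trans hx
    have he : exponentialPDFReal (1/Ω) x = 1/Ω * rexp (-(1/Ω * x)) := by
      rw [exponentialPDFReal, gammaPDFReal, if_pos hxpos.le]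
      simp [Real.Gamma_one]
    simp only [Pi.mul_apply, he]
    rw [← ENNReal.ofReal_mul (by positivity)]
  rw [setLIntegral_congr_fun measurableSet_Ioi h1,
    ← ofReal_integral_eq_lintegral_ofReal (integrable_aux hΩ hδ hx0) ?_,
    tail_integral hΩ hδ hx0 hx0sol]
  refine Filter.Eventually.mono (ae_restrict_mem measurableSet_Ioi) fun x hx => ?_
  have hxpos : 0 < x := hx0.trans hx
  simp only [Pi.zero_apply]
  positivity

lemma exp_Iic {Ω x0 : ℝ} (hΩ : 0 < Ω) (hx0 : 0 < x0) :
    expMeasure (1/Ω) (Iic x0) = ENNReal.ofReal (1 - rexp (-x0 / Ω)) := by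
  rw [expMeasure_def, withDensity_apply _ measurableSet_Iic,
    lintegral_exponentialPDF_eq_antiDeriv (by positivity) x0, if_pos hx0.le]
  rw [show -(1/Ω * x0) = -x0 / Ω by ring]

lemma exp_Iio {Ω x0 : ℝ} (hΩ : 0 < Ω) (hx0 : 0 < x0) :
    expMeasure (1/Ω) (Iio x0) = ENNReal.ofReal (1 - rexp (-x0 / Ω)) := by
  have hsing : expMeasure (1/Ω) {x0} = 0 := by
    rw [expMeasure_def]
    exact (withDensity_absolutelyContinuous _ _) (measure_singleton x0)
  have h1 : expMeasure (1/Ω) (Iic x0) = expMeasure (1/Ω) (Iio x0) := by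
    apply le_antisymm
    · rw [← Iio_union_right]
      calc expMeasure (1/Ω) (Iio x0 ∪ {x0}) ≤ _ := measure_union_le _ _
        _ = expMeasure (1/Ω) (Iio x0) := by rw [hsing, add_zero]
    · exact measure_mono Iio_subset_Iic_self
  rw [← h1, exp_Iic hΩ hx0]

lemma exp_Ici {Ω x0 : ℝ} (hΩ : 0 < Ω) (hx0 : 0 < x0) :
    expMeasure (1/Ω) (Ici x0) = ENNReal.ofReal (rexp (-x0 / Ω)) := by
  have : IsProbabilityMeasure (expMeasure (1/Ω)) :=
    isProbabilityMeasure_expMeasure (by positivity)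
  have hc : (Iio x0)ᶜ = Ici x0 := compl_Iio
  rw [← hc, measure_compl measurableSet_Iio (measure_ne_top _ _), exp_Iio hΩ hx0,
    measure_univ]
  have he : rexp (-x0 / Ω) ≤ 1 := by
    apply Real.exp_le_one_iff.mpr
    rw [neg_div]
    simp only [Left.neg_nonpos_iff]
    positivity
  rw [← ENNReal.ofReal_one, ← ENNReal.ofReal_sub _ (by nlinarith [Real.exp_pos (-x0/Ω)] : (0:ℝ) ≤ 1 - rexp (-x0/Ω))]
  congr 1
  linarith


/-- `X` is exponential with mean `Ω` (rate `1/Ω`), `x0 > 0` solves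
`(δ/Ω) E1(x0/Ω) = P̄`, and `P*(x) = δ/x` for `x ≥ x0`, `0` otherwise. Then
`E[P*(X)] = P̄`, and every measurable nonnegative power allocation `P` with
`E[P(X)] ≤ P̄` has outage probability
`Pr{P(X) X < δ} ≥ Pr{P*(X) X < δ} = 1 - e^{-x0/Ω}`. -/
theorem stmt_5 {Ωsp : Type*} [MeasurableSpace Ωsp] (μ : Measure Ωsp)
    [IsProbabilityMeasure μ]
    (X : Ωsp → ℝ) (hX : Measurable X)
    (Ω δ Pbar x0 : ℝ) (hΩ : 0 < Ω) (hδ : 0 < δ) (hPbar : 0 < Pbar) (hx0 : 0 < x0)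
    (hXdist : Measure.map X μ = expMeasure (1 / Ω))
    (hx0sol : (δ / Ω) * expInt (x0 / Ω) = Pbar)
    (Pstar : ℝ → ℝ) (hPstar : ∀ x, Pstar x = if x0 ≤ x then δ / x else 0) :
    (∫⁻ ω, ENNReal.ofReal (Pstar (X ω)) ∂μ = ENNReal.ofReal Pbar) ∧
    (μ {ω | Pstar (X ω) * X ω < δ} = ENNReal.ofReal (1 - Real.exp (-x0 / Ω))) ∧
    (∀ P : ℝ → ℝ, Measurable P → (∀ x, 0 ≤ P x) →
      (∫⁻ ω, ENNReal.ofReal (P (X ω)) ∂μ) ≤ ENNReal.ofReal Pbar →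
      μ {ω | P (X ω) * X ω < δ} ≥ μ {ω | Pstar (X ω) * X ω < δ}) := by
  have hone : (1:ℝ)/Ω = 1/Ω := rfl
  have hr : (0:ℝ) < 1/Ω := by positivity
  have hprob : IsProbabilityMeasure (expMeasure (1/Ω)) := isProbabilityMeasure_expMeasure hr
  set ν := expMeasure (1/Ω) with hν
  have hPfun : Pstar = fun x => if x0 ≤ x then δ / x else 0 := funext hPstar
  have hPm : Measurable Pstar := by
    rw [hPfun]
    exact Measurable.ite measurableSet_Ici (measurable_const.div measurable_id) measurable_const
  have hmap : ∀ (g : ℝ → ℝ≥0∞), Measurable g →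
      ∫⁻ ω, g (X ω) ∂μ = ∫⁻ x, g x ∂ν := by
    intro g hg
    rw [← hXdist, lintegral_map hg hX]
  have hmapset : ∀ (s : Set ℝ), MeasurableSet s → μ (X ⁻¹' s) = ν s := by
    intro s hs
    rw [← hXdist, Measure.map_apply hX hs]
  -- Part 1
  have part1 : ∫⁻ ω, ENNReal.ofReal (Pstar (X ω)) ∂μ = ENNReal.ofReal Pbar := by
    rw [hmap _ hPm.ennreal_ofReal]
    have hind : ∀ x, ENNReal.ofReal (Pstar x)
        = Set.indicator (Set.Ici x0) (fun x => ENNReal.ofReal (δ / x)) x := by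
      intro x
      rw [hPstar x]
      by_cases h : x0 ≤ x
      · simp [Set.indicator_apply, Set.mem_Ici, h]
      · simp [Set.indicator_apply, Set.mem_Ici, h]
    simp_rw [hind]
    rw [lintegral_indicator measurableSet_Ici]
    exact tail_lintegral hΩ hδ hx0 hx0sol
  -- outage set of Pstar
  have hset : {x : ℝ | Pstar x * x < δ} = Set.Iio x0 := by
    ext x
    simp only [Set.mem_setOf_eq, Set.mem_Iio, hPstar x]
    constructor
    · intro h
      by_contra hge
      push_neg at hge
      rw [if_pos hge, div_mul_cancel₀ _ (ne_of_gt (lt_of_lt_of_le hx0 hge))] at h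
      exact lt_irrefl _ h
    · intro h
      rw [if_neg (not_le.mpr h), zero_mul]
      exact hδ
  have part2 : μ {ω | Pstar (X ω) * X ω < δ} = ENNReal.ofReal (1 - Real.exp (-x0 / Ω)) := by
    have : {ω | Pstar (X ω) * X ω < δ} = X ⁻¹' {x : ℝ | Pstar x * x < δ} := rfl
    rw [this, hset, hmapset _ measurableSet_Iio, hν, exp_Iio hΩ hx0]
  refine ⟨part1, part2, ?_⟩
  -- Part 3
  intro P hPmeas hPnn hPle
  set f : ℝ → ℝ≥0∞ := fun x => ENNReal.ofReal (δ / x) with hf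
  set A : Set ℝ := {x | δ ≤ P x * x} with hAdef
  have hA : MeasurableSet A := measurableSet_le measurable_const (hPmeas.mul measurable_id)
  have hμP : μ {ω | P (X ω) * X ω < δ} = ν Aᶜ := by
    have h1 : {ω | P (X ω) * X ω < δ} = X ⁻¹' {x : ℝ | P x * x < δ} := rfl
    have h2 : {x : ℝ | P x * x < δ} = Aᶜ := by
      ext x; simp [hAdef, not_le]
    rw [h1, h2, hmapset _ hA.compl]
  by_contra hcon
  push_neg at hcon
  rw [hμP, part2, ← exp_Iio hΩ hx0] at hcon
  -- hcon : ν Aᶜ < ν (Iio x0)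
  have hApos : ∀ x ∈ A, 0 < x := by
    intro x hx
    by_contra h
    push_neg at h
    have h2 : P x * x ≤ 0 := mul_nonpos_of_nonneg_of_nonpos (hPnn x) h
    have h3 : δ ≤ P x * x := hx
    linarith
  have hTA : ν (Set.Ici x0) < ν A := by
    by_contra hle
    push_neg at hle
    have h1 : ν Aᶜ = 1 - ν A := by
      rw [measure_compl hA (measure_ne_top _ _), measure_univ]
    have h2 : ν (Set.Iio x0) = 1 - ν (Set.Ici x0) := by
      rw [← Set.compl_Ici, measure_compl measurableSet_Ici (measure_ne_top _ _), measure_univ]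
    rw [h1, h2] at hcon
    exact absurd (tsub_le_tsub_left hle 1) (not_le.mpr hcon)
  have hdiff : ν (Set.Ici x0 \ A) < ν (A \ Set.Ici x0) := by
    by_contra hle
    push_neg at hle
    have hsA : ν (A ∩ Set.Ici x0) + ν (A \ Set.Ici x0) = ν A :=
      measure_inter_add_diff A measurableSet_Ici
    have hsT : ν (Set.Ici x0 ∩ A) + ν (Set.Ici x0 \ A) = ν (Set.Ici x0) :=
      measure_inter_add_diff _ hA
    have : ν A ≤ ν (Set.Ici x0) := by
      rw [← hsA, ← hsT, Set.inter_comm]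
      exact add_le_add le_rfl hle
    exact absurd hTA (not_lt.mpr this)
  set c : ℝ≥0∞ := ENNReal.ofReal (δ / x0) with hc
  have hc0 : c ≠ 0 := by
    simp only [hc, ne_eq, ENNReal.ofReal_eq_zero, not_le]
    positivity
  have hcT : c ≠ ⊤ := ENNReal.ofReal_ne_top
  have hlow : c * ν (A \ Set.Ici x0) ≤ ∫⁻ x in A \ Set.Ici x0, f x ∂ν := by
    rw [← setLIntegral_const]
    refine setLIntegral_mono' (hA.diff measurableSet_Ici) fun x hx => ?_
    have hxpos := hApos x hx.1
    have hxlt : x < x0 := not_le.mp hx.2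
    exact ENNReal.ofReal_le_ofReal (div_le_div_of_nonneg_left hδ.le hxpos hxlt.le)
  have hupp : ∫⁻ x in Set.Ici x0 \ A, f x ∂ν ≤ c * ν (Set.Ici x0 \ A) := by
    rw [← setLIntegral_const]
    refine setLIntegral_mono' (measurableSet_Ici.diff hA) fun x hx => ?_
    exact ENNReal.ofReal_le_ofReal (div_le_div_of_nonneg_left hδ.le hx0 hx.1)
  have htail : ∫⁻ x in Set.Ici x0, f x ∂ν = ENNReal.ofReal Pbar :=
    tail_lintegral hΩ hδ hx0 hx0sol
  have hsIT : ∫⁻ x in Set.Ici x0 ∩ A, f x ∂ν + ∫⁻ x in Set.Ici x0 \ A, f x ∂ν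
      = ∫⁻ x in Set.Ici x0, f x ∂ν := lintegral_inter_add_diff f (Set.Ici x0) hA
  have hsIA : ∫⁻ x in A ∩ Set.Ici x0, f x ∂ν + ∫⁻ x in A \ Set.Ici x0, f x ∂ν
      = ∫⁻ x in A, f x ∂ν := lintegral_inter_add_diff f A measurableSet_Ici
  have hfinIT : ∫⁻ x in Set.Ici x0 ∩ A, f x ∂ν ≠ ⊤ := by
    refine ne_top_of_le_ne_top ?_ (lintegral_mono_set Set.inter_subset_left)
    rw [htail]
    exact ENNReal.ofReal_ne_top
  have hchain : ENNReal.ofReal Pbar < ∫⁻ x in A, f x ∂ν := by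
    rw [← htail, ← hsIT, ← hsIA]
    calc ∫⁻ x in Set.Ici x0 ∩ A, f x ∂ν + ∫⁻ x in Set.Ici x0 \ A, f x ∂ν
        ≤ ∫⁻ x in Set.Ici x0 ∩ A, f x ∂ν + c * ν (Set.Ici x0 \ A) := add_le_add le_rfl hupp
      _ < ∫⁻ x in Set.Ici x0 ∩ A, f x ∂ν + c * ν (A \ Set.Ici x0) := by
          exact ENNReal.add_lt_add_left hfinIT ((ENNReal.mul_lt_mul_iff_right hc0 hcT).mpr hdiff)
      _ ≤ ∫⁻ x in Set.Ici x0 ∩ A, f x ∂ν + ∫⁻ x in A \ Set.Ici x0, f x ∂ν :=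
          add_le_add le_rfl hlow
      _ = ∫⁻ x in A ∩ Set.Ici x0, f x ∂ν + ∫⁻ x in A \ Set.Ici x0, f x ∂ν := by
          rw [Set.inter_comm]
  have hPge : ∫⁻ x in A, f x ∂ν ≤ ∫⁻ x, ENNReal.ofReal (P x) ∂ν := by
    calc ∫⁻ x in A, f x ∂ν ≤ ∫⁻ x in A, ENNReal.ofReal (P x) ∂ν := by
          refine setLIntegral_mono' hA fun x hx => ?_
          have hxpos := hApos x hx
          exact ENNReal.ofReal_le_ofReal ((div_le_iff₀ hxpos).mpr hx)
      _ ≤ ∫⁻ x, ENNReal.ofReal (P x) ∂ν := setLIntegral_le_lintegral _ _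
  rw [← hmap _ hPmeas.ennreal_ofReal] at hPge
  exact absurd (lt_of_lt_of_le hchain (le_trans hPge hPle)) (lt_irrefl _)
end

section
/- Let X and Y be independent exponentially distributed random variables with means Ω_X > 0 and Ω_Y > 0, let δ1, δ2, x0, y0 > 0, and define D_R = {(x,y) : x ≥ x0, y ≥ y0} and P_{R,st}(x,y) = max{δ1/y, δ2/x} for (x,y) ∈ D_R and P_{R,st}(x,y) = 0 otherwise. Let 0 < P_avg ≤ E[P_{R,st}(X,Y)] and let ρ > 0 satisfy E[P_{R,st}(X,Y)·1{P_{R,st}(X,Y) ≤ ρ}] = P_avg. Define P*(x,y) = P_{R,st}(x,y) if P_{R,st}(x,y) ≤ ρ and P*(x,y) = 0 otherwise. Then E[P*(X,Y)] ≤ P_avg, and for every measurable function P : [0,∞)² → [0,∞) with E[P(X,Y)] ≤ P_avg, it holds that Pr{(X,Y) ∈ D_R and (P(X,Y)·Y < δ1 or P(X,Y)·X < δ2)} ≥ Pr{(X,Y) ∈ D_R and (P*(X,Y)·Y < δ1 or P*(X,Y)·X < δ2)}. -/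
open MeasureTheory ProbabilityTheory

/-- `X, Y` independent exponentials with means `Ω_X, Ω_Y`; `P_{R,st}(x,y) =
max (δ1/y) (δ2/x)` on `D_R = {x ≥ x0, y ≥ y0}` and `0` otherwise; `ρ > 0` chosen so the
truncated allocation has average power exactly `P_avg ≤ E[P_{R,st}(X,Y)]`; `P*` is the
truncation of `P_{R,st}` at level `ρ`. Then `E[P*(X,Y)] ≤ P_avg`, and every measurable
nonnegative relay allocation `P` with `E[P(X,Y)] ≤ P_avg` has broadcast-phase outage
probability at least that of `P*`. -/
theorem stmt_6 {Ωsp : Type*} [MeasurableSpace Ωsp] (μ : Measure Ωsp)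
    [IsProbabilityMeasure μ]
    (X Y : Ωsp → ℝ) (hX : Measurable X) (hY : Measurable Y)
    (hindep : IndepFun X Y μ)
    (ΩX ΩY δ1 δ2 x0 y0 Pavg ρ : ℝ)
    (hΩX : 0 < ΩX) (hΩY : 0 < ΩY) (hδ1 : 0 < δ1) (hδ2 : 0 < δ2)
    (hx0 : 0 < x0) (hy0 : 0 < y0) (hPavg : 0 < Pavg) (hρ : 0 < ρ)
    (hXdist : Measure.map X μ = expMeasure (1 / ΩX))
    (hYdist : Measure.map Y μ = expMeasure (1 / ΩY))
    (PRst : ℝ → ℝ → ℝ)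
    (hPRst : ∀ x y, PRst x y =
      if x0 ≤ x ∧ y0 ≤ y then max (δ1 / y) (δ2 / x) else 0)
    (hPavgle : ENNReal.ofReal Pavg ≤ ∫⁻ ω, ENNReal.ofReal (PRst (X ω) (Y ω)) ∂μ)
    (hρsol : ∫⁻ ω, ENNReal.ofReal
        (if PRst (X ω) (Y ω) ≤ ρ then PRst (X ω) (Y ω) else 0) ∂μ =
      ENNReal.ofReal Pavg)
    (Pstar : ℝ → ℝ → ℝ)
    (hPstar : ∀ x y, Pstar x y = if PRst x y ≤ ρ then PRst x y else 0) :
    (∫⁻ ω, ENNReal.ofReal (Pstar (X ω) (Y ω)) ∂μ ≤ ENNReal.ofReal Pavg) ∧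
    (∀ P : ℝ → ℝ → ℝ, Measurable (Function.uncurry P) → (∀ x y, 0 ≤ P x y) →
      (∫⁻ ω, ENNReal.ofReal (P (X ω) (Y ω)) ∂μ) ≤ ENNReal.ofReal Pavg →
      μ {ω | (x0 ≤ X ω ∧ y0 ≤ Y ω) ∧
          (P (X ω) (Y ω) * Y ω < δ1 ∨ P (X ω) (Y ω) * X ω < δ2)} ≥
      μ {ω | (x0 ≤ X ω ∧ y0 ≤ Y ω) ∧
          (Pstar (X ω) (Y ω) * Y ω < δ1 ∨ Pstar (X ω) (Y ω) * X ω < δ2)}) := by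
  classical
  have hofR : ENNReal.ofReal Pavg ≠ ⊤ := ENNReal.ofReal_ne_top
  -- measurability of ω ↦ PRst (X ω) (Y ω)
  have hfmeas : Measurable (fun ω => PRst (X ω) (Y ω)) := by
    simp only [hPRst]
    exact Measurable.ite
      ((measurableSet_le measurable_const hX).inter (measurableSet_le measurable_const hY))
      ((measurable_const.div hY).max (measurable_const.div hX)) measurable_const
  set D : Set Ωsp := {ω | x0 ≤ X ω ∧ y0 ≤ Y ω} with hDdef
  have hDmeas : MeasurableSet D :=
    (measurableSet_le measurable_const hX).inter (measurableSet_le measurable_const hY)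
  set B : Set Ωsp := {ω | PRst (X ω) (Y ω) ≤ ρ} with hBdef
  have hBmeas : MeasurableSet B := measurableSet_le hfmeas measurable_const
  -- positivity of PRst on D
  have hfpos : ∀ ω ∈ D, 0 < PRst (X ω) (Y ω) := by
    intro ω hω
    have hω' : x0 ≤ X ω ∧ y0 ≤ Y ω := hω
    rw [hPRst, if_pos hω']
    exact lt_max_of_lt_left (div_pos hδ1 (lt_of_lt_of_le hy0 hω.2))
  -- key characterization: on D, success with power p ↔ PRst ≤ p
  have hkey : ∀ ω ∈ D, ∀ p : ℝ,
      (PRst (X ω) (Y ω) ≤ p ↔ δ1 ≤ p * Y ω ∧ δ2 ≤ p * X ω) := by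
    intro ω hω p
    have hω' : x0 ≤ X ω ∧ y0 ≤ Y ω := hω
    rw [hPRst, if_pos hω', max_le_iff, div_le_iff₀ (lt_of_lt_of_le hy0 hω.2),
      div_le_iff₀ (lt_of_lt_of_le hx0 hω.1)]
  -- rewrite hρsol as an integral over B
  have hBint : ∫⁻ ω in B, ENNReal.ofReal (PRst (X ω) (Y ω)) ∂μ = ENNReal.ofReal Pavg := by
    rw [← lintegral_indicator hBmeas, ← hρsol]
    congr 1
    funext ω
    by_cases h : PRst (X ω) (Y ω) ≤ ρ
    · rw [Set.indicator_of_mem (show ω ∈ B from h), if_pos h]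
    · rw [Set.indicator_of_notMem (show ω ∉ B from h), if_neg h, ENNReal.ofReal_zero]
  refine ⟨?_, ?_⟩
  · -- First conjunct
    refine le_of_eq ?_
    rw [← hρsol]
    congr 1
    funext ω
    rw [hPstar]
  -- Second conjunct
  intro P hPmeas hPnonneg hPint
  have hgmeas : Measurable (fun ω => P (X ω) (Y ω)) := hPmeas.comp (hX.prodMk hY)
  set A : Set Ωsp := D ∩ {ω | PRst (X ω) (Y ω) ≤ P (X ω) (Y ω)} with hAdef
  have hAmeas : MeasurableSet A := hDmeas.inter (measurableSet_le hfmeas hgmeas)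
  have hAsubD : A ⊆ D := Set.inter_subset_left
  have hfinAB : ∫⁻ ω in A ∩ B, ENNReal.ofReal (PRst (X ω) (Y ω)) ∂μ ≠ ⊤ := by
    refine ne_top_of_le_ne_top hofR ?_
    rw [← hBint]
    exact lintegral_mono_set Set.inter_subset_right
  -- step 1 : lower bound on Pavg from the allocation P
  have step1 : ∫⁻ ω in A ∩ B, ENNReal.ofReal (PRst (X ω) (Y ω)) ∂μ
      + ENNReal.ofReal ρ * μ (A \ B) ≤ ENNReal.ofReal Pavg := by
    have hsplit : ∫⁻ ω in A, ENNReal.ofReal (PRst (X ω) (Y ω)) ∂μ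
        = ∫⁻ ω in A ∩ B, ENNReal.ofReal (PRst (X ω) (Y ω)) ∂μ
        + ∫⁻ ω in A \ B, ENNReal.ofReal (PRst (X ω) (Y ω)) ∂μ := by
      rw [← lintegral_union (hAmeas.diff hBmeas)
        (Set.disjoint_sdiff_right.mono_left Set.inter_subset_right), Set.inter_union_diff]
    have hdiffge : ENNReal.ofReal ρ * μ (A \ B)
        ≤ ∫⁻ ω in A \ B, ENNReal.ofReal (PRst (X ω) (Y ω)) ∂μ := by
      rw [← setLIntegral_const]
      refine setLIntegral_mono (ENNReal.measurable_ofReal.comp hfmeas) ?_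
      intro ω hω
      exact ENNReal.ofReal_le_ofReal (le_of_lt (lt_of_not_ge hω.2))
    calc ∫⁻ ω in A ∩ B, ENNReal.ofReal (PRst (X ω) (Y ω)) ∂μ
        + ENNReal.ofReal ρ * μ (A \ B)
        ≤ ∫⁻ ω in A, ENNReal.ofReal (PRst (X ω) (Y ω)) ∂μ := by
          rw [hsplit]; exact add_le_add_right hdiffge _
      _ ≤ ∫⁻ ω in A, ENNReal.ofReal (P (X ω) (Y ω)) ∂μ := by
          refine setLIntegral_mono (ENNReal.measurable_ofReal.comp hgmeas) ?_
          intro ω hω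
          exact ENNReal.ofReal_le_ofReal hω.2
      _ ≤ ∫⁻ ω, ENNReal.ofReal (P (X ω) (Y ω)) ∂μ := setLIntegral_le_lintegral _ _
      _ ≤ ENNReal.ofReal Pavg := hPint
  -- step 2 : upper bound on Pavg from the truncated allocation
  have step2 : ENNReal.ofReal Pavg ≤ ∫⁻ ω in A ∩ B, ENNReal.ofReal (PRst (X ω) (Y ω)) ∂μ
      + ENNReal.ofReal ρ * μ ((D ∩ B) \ A) := by
    have hsplit : ∫⁻ ω in B, ENNReal.ofReal (PRst (X ω) (Y ω)) ∂μ
        = ∫⁻ ω in B ∩ A, ENNReal.ofReal (PRst (X ω) (Y ω)) ∂μ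
        + ∫⁻ ω in B \ A, ENNReal.ofReal (PRst (X ω) (Y ω)) ∂μ := by
      rw [← lintegral_union (hBmeas.diff hAmeas)
        (Set.disjoint_sdiff_right.mono_left Set.inter_subset_right), Set.inter_union_diff]
    have hBA : ∫⁻ ω in B \ A, ENNReal.ofReal (PRst (X ω) (Y ω)) ∂μ
        ≤ ENNReal.ofReal ρ * μ ((D ∩ B) \ A) := by
      have hset : ((D ∩ B) \ A) = D ∩ (B \ A) := by
        ext ω
        simp only [Set.mem_diff, Set.mem_inter_iff]
        tauto
      calc ∫⁻ ω in B \ A, ENNReal.ofReal (PRst (X ω) (Y ω)) ∂μ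
          ≤ ∫⁻ ω in B \ A, D.indicator (fun _ => ENNReal.ofReal ρ) ω ∂μ := by
            refine setLIntegral_mono (measurable_const.indicator hDmeas) ?_
            intro ω hω
            by_cases hD : ω ∈ D
            · rw [Set.indicator_of_mem hD]
              exact ENNReal.ofReal_le_ofReal hω.1
            · rw [Set.indicator_of_notMem hD]
              have hD' : ¬ (x0 ≤ X ω ∧ y0 ≤ Y ω) := hD
              have : PRst (X ω) (Y ω) = 0 := by rw [hPRst, if_neg hD']
              simp [this]
        _ = ENNReal.ofReal ρ * μ (D ∩ (B \ A)) := by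
            rw [setLIntegral_indicator hDmeas, setLIntegral_const]
        _ = ENNReal.ofReal ρ * μ ((D ∩ B) \ A) := by rw [hset]
    calc ENNReal.ofReal Pavg
        = ∫⁻ ω in B ∩ A, ENNReal.ofReal (PRst (X ω) (Y ω)) ∂μ
          + ∫⁻ ω in B \ A, ENNReal.ofReal (PRst (X ω) (Y ω)) ∂μ := by
          rw [← hsplit, hBint]
      _ ≤ ∫⁻ ω in A ∩ B, ENNReal.ofReal (PRst (X ω) (Y ω)) ∂μ
          + ENNReal.ofReal ρ * μ ((D ∩ B) \ A) := by
          rw [Set.inter_comm B A]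
          exact add_le_add_right hBA _
  -- core inequality
  have hcore : μ A ≤ μ (D ∩ B) := by
    have h1 : ENNReal.ofReal ρ * μ (A \ B) ≤ ENNReal.ofReal ρ * μ ((D ∩ B) \ A) :=
      (ENNReal.add_le_add_iff_left hfinAB).mp (le_trans step1 step2)
    have h2 : μ (A \ B) ≤ μ ((D ∩ B) \ A) :=
      (ENNReal.mul_le_mul_iff_right (by simp [ENNReal.ofReal_eq_zero, not_le, hρ])
        ENNReal.ofReal_ne_top).mp h1
    have h3 : A \ (D ∩ B) = A \ B := by
      ext ω
      simp only [Set.mem_diff, Set.mem_inter_iff]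
      exact ⟨fun ⟨h, hn⟩ => ⟨h, fun hb => hn ⟨hAsubD h, hb⟩⟩,
        fun ⟨h, hn⟩ => ⟨h, fun hdb => hn hdb.2⟩⟩
    calc μ A = μ (A ∩ (D ∩ B)) + μ (A \ (D ∩ B)) :=
          (measure_inter_add_diff A (hDmeas.inter hBmeas)).symm
      _ ≤ μ ((D ∩ B) ∩ A) + μ ((D ∩ B) \ A) := by
          rw [h3, Set.inter_comm]
          exact add_le_add_right h2 _
      _ = μ (D ∩ B) := measure_inter_add_diff _ hAmeas
  -- identify the outage sets
  have houtP : {ω | (x0 ≤ X ω ∧ y0 ≤ Y ω) ∧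
      (P (X ω) (Y ω) * Y ω < δ1 ∨ P (X ω) (Y ω) * X ω < δ2)} = D \ A := by
    ext ω
    simp only [Set.mem_setOf_eq, Set.mem_diff, hAdef, Set.mem_inter_iff]
    constructor
    · rintro ⟨hD, hout⟩
      refine ⟨hD, fun hmem => ?_⟩
      have := (hkey ω hD _).mp hmem.2
      rcases hout with h | h
      · exact absurd this.1 (not_le.mpr h)
      · exact absurd this.2 (not_le.mpr h)
    · rintro ⟨hD, hmem⟩
      refine ⟨hD, ?_⟩
      have : ¬ PRst (X ω) (Y ω) ≤ P (X ω) (Y ω) := fun h => hmem ⟨hD, h⟩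
      rw [hkey ω hD] at this
      push_neg at this
      by_cases h1 : δ1 ≤ P (X ω) (Y ω) * Y ω
      · exact Or.inr (this h1)
      · exact Or.inl (not_le.mp h1)
  have houtStar : {ω | (x0 ≤ X ω ∧ y0 ≤ Y ω) ∧
      (Pstar (X ω) (Y ω) * Y ω < δ1 ∨ Pstar (X ω) (Y ω) * X ω < δ2)} = D \ (D ∩ B) := by
    ext ω
    simp only [Set.mem_setOf_eq, Set.mem_diff, Set.mem_inter_iff]
    constructor
    · rintro ⟨hD, hout⟩
      refine ⟨hD, fun hmem => ?_⟩
      have hmem' : PRst (X ω) (Y ω) ≤ ρ := hmem.2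
      have hps : Pstar (X ω) (Y ω) = PRst (X ω) (Y ω) := by rw [hPstar, if_pos hmem']
      have := (hkey ω hD _).mp (le_of_eq hps.symm)
      rcases hout with h | h
      · exact absurd this.1 (not_le.mpr h)
      · exact absurd this.2 (not_le.mpr h)
    · rintro ⟨hD, hmem⟩
      refine ⟨hD, ?_⟩
      have hB' : ¬ PRst (X ω) (Y ω) ≤ ρ := fun h => hmem ⟨hD, h⟩
      have hps : Pstar (X ω) (Y ω) = 0 := by rw [hPstar, if_neg hB']
      have : ¬ PRst (X ω) (Y ω) ≤ Pstar (X ω) (Y ω) := by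
        rw [hps]
        exact not_le.mpr (hfpos ω hD)
      rw [hkey ω hD] at this
      push_neg at this
      by_cases h1 : δ1 ≤ Pstar (X ω) (Y ω) * Y ω
      · exact Or.inr (this h1)
      · exact Or.inl (not_le.mp h1)
  rw [houtP, houtStar, ge_iff_le,
    measure_diff Set.inter_subset_left (hDmeas.inter hBmeas).nullMeasurableSet
      (measure_ne_top μ _),
    measure_diff hAsubD hAmeas.nullMeasurableSet (measure_ne_top μ _)]
  exact tsub_le_tsub_left hcore _
end

section
/- Let X and Y be independent exponentially distributed random variables with means Ω_X > 0 and Ω_Y > 0, let δ1, δ2, x0, y0, ρ > 0 with δ2·y0 ≤ δ1·x0 and ρ ≥ δ2/x0, and set λ2 = max{y0, δ1/ρ}. Define P*(x,y) = max{δ1/y, δ2/x} if x ≥ x0, y ≥ y0, and max{δ1/y, δ2/x} ≤ ρ, and P*(x,y) = 0 otherwise. Then the average relay output power equals E[P*(X,Y)] = (δ1/Ω_Y)·E1(λ2/Ω_Y)·e^{−x0/Ω_X} − (δ1/Ω_Y)·E1(δ1·x0/(δ2·Ω_Y))·e^{−x0/Ω_X} + (δ1/Ω_Y)·E1((1/Ω_X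 + δ1/(δ2·Ω_Y))·x0) + (δ2/Ω_X)·E1((1/Ω_X + δ1/(δ2·Ω_Y))·x0), where E1(z) = ∫_z^{∞}(e^{−t}/t) dt. -/
open MeasureTheory ProbabilityTheory

open Set Filter Topology
open scoped ENNReal NNReal

lemma integrableOn_exp_div {c s : ℝ} (hc : 0 < c) (hs : 0 < s) :
    IntegrableOn (fun t => Real.exp (-(c * t)) / t) (Set.Ioi s) := by
  have hmeas : Measurable (fun t : ℝ => Real.exp (-(c * t)) / t) := by
    exact (Real.measurable_exp.comp ((measurable_const.mul measurable_id).neg)).div measurable_id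
  refine Integrable.mono' (g := fun t => s⁻¹ * Real.exp (-c * t)) ?_ hmeas.aestronglyMeasurable ?_
  · exact (exp_neg_integrableOn_Ioi s hc).const_mul _
  · filter_upwards [ae_restrict_mem measurableSet_Ioi] with t ht
    have ht' : s < t := ht
    have h0 : 0 < t := hs.trans ht'
    rw [Real.norm_eq_abs, abs_of_nonneg (by positivity)]
    rw [neg_mul, div_eq_mul_inv, mul_comm]
    have he : (0:ℝ) ≤ Real.exp (-(c * t)) := (Real.exp_pos _).le
    gcongr

lemma expInt_nonneg {z : ℝ} (hz : 0 < z) : 0 ≤ expInt z := by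
  refine setIntegral_nonneg measurableSet_Ioi fun t ht => ?_
  have : 0 < t := hz.trans ht
  positivity

lemma integral_exp_div_Ioi {c s : ℝ} (hc : 0 < c) (hs : 0 < s) :
    ∫ t in Set.Ioi s, Real.exp (-(c * t)) / t = expInt (c * s) := by
  have h := MeasureTheory.integral_comp_mul_left_Ioi
    (fun u => c * (Real.exp (-u) / u)) s hc
  have h1 : ∫ x in Set.Ioi s, c * (Real.exp (-(c * x)) / (c * x))
      = ∫ x in Set.Ioi s, Real.exp (-(c * x)) / x := by
    refine setIntegral_congr_fun measurableSet_Ioi fun x hx => ?_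
    have hx0 : 0 < x := hs.trans hx
    field_simp
  rw [h1] at h
  rw [h, smul_eq_mul, MeasureTheory.integral_const_mul]
  rw [expInt]
  field_simp

lemma integral_exp_neg_mul_Ioi {c s : ℝ} (hc : 0 < c) :
    ∫ t in Set.Ioi s, c * Real.exp (-(c * t)) = Real.exp (-(c * s)) := by
  have h := MeasureTheory.integral_Ioi_of_hasDerivAt_of_nonneg
    (g := fun t => -Real.exp (-(c * t))) (g' := fun t => c * Real.exp (-(c * t))) (a := s)
    (l := 0) ?_ ?_ ?_ ?_
  · rw [h]; ring
  · exact (Continuous.continuousWithinAt (by continuity))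
  · intro x _; exact ProbabilityTheory.hasDerivAt_neg_exp_mul_exp
  · intro x _; positivity
  · rw [show (0:ℝ) = -0 by ring]
    refine Tendsto.neg ?_
    refine Real.tendsto_exp_atBot.comp ?_
    simp_rw [← neg_mul]
    exact tendsto_id.const_mul_atTop_of_neg (by linarith)

lemma integrableOn_exp_div_one {s : ℝ} (hs : 0 < s) :
    IntegrableOn (fun t => Real.exp (-t) / t) (Set.Ioi s) := by
  have := integrableOn_exp_div (c := 1) (s := s) one_pos hs
  simpa using this

lemma expInt_split {u v : ℝ} (hu : 0 < u) (huv : u ≤ v) :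
    expInt u = (∫ t in Set.Ioc u v, Real.exp (-t) / t) + expInt v := by
  rw [expInt, expInt, ← Set.Ioc_union_Ioi_eq_Ioi huv]
  exact setIntegral_union (Set.Ioc_disjoint_Ioi le_rfl) measurableSet_Ioi
    ((integrableOn_exp_div_one hu).mono_set Set.Ioc_subset_Ioi_self)
    ((integrableOn_exp_div_one (hu.trans_le huv)))

lemma continuousAt_exp_div {z : ℝ} (hz : z ≠ 0) :
    ContinuousAt (fun t : ℝ => Real.exp (-t) / t) z :=
  (Real.continuous_exp.continuousAt.comp continuousAt_neg).div continuousAt_id hz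

lemma intervalIntegrable_exp_div {u v : ℝ} (hu : 0 < u) (hv : 0 < v) :
    IntervalIntegrable (fun t => Real.exp (-t) / t) volume u v := by
  refine ContinuousOn.intervalIntegrable fun t ht => ?_
  have : 0 < t := lt_of_lt_of_le (lt_min hu hv) ht.1
  exact (continuousAt_exp_div this.ne').continuousWithinAt

lemma hasDerivAt_expInt {z : ℝ} (hz : 0 < z) :
    HasDerivAt expInt (-(Real.exp (-z) / z)) z := by
  have key : ∀ x ∈ Set.Ioi (0:ℝ),
      expInt x = expInt 1 - ∫ t in (1:ℝ)..x, Real.exp (-t) / t := by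
    intro x hx
    rcases le_total x 1 with h | h
    · rw [intervalIntegral.integral_symm, intervalIntegral.integral_of_le h]
      have := expInt_split hx h
      linarith [this]
    · rw [intervalIntegral.integral_of_le h]
      have := expInt_split one_pos h
      linarith [this]
  have hg : HasDerivAt (fun x => expInt 1 - ∫ t in (1:ℝ)..x, Real.exp (-t) / t)
      (-(Real.exp (-z) / z)) z := by
    refine (HasDerivAt.const_sub _ ?_)
    refine intervalIntegral.integral_hasDerivAt_right
      (intervalIntegrable_exp_div one_pos hz)
      ?_ (continuousAt_exp_div hz.ne')
    have hm : Measurable fun t : ℝ => Real.exp (-t) / t :=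
      (Real.measurable_exp.comp measurable_neg).div measurable_id
    exact ⟨Set.univ, Filter.univ_mem, hm.aestronglyMeasurable.restrict⟩
  exact hg.congr_of_eventuallyEq (eventuallyEq_of_mem (Ioi_mem_nhds hz) key)

lemma tendsto_expInt : Tendsto expInt atTop (𝓝 0) := by
  have h1 : ∀ᶠ z in atTop, 0 ≤ expInt z := by
    filter_upwards [eventually_gt_atTop 0] with z hz using expInt_nonneg hz
  have h2 : ∀ᶠ z in atTop, expInt z ≤ Real.exp (-z) := by
    filter_upwards [eventually_ge_atTop 1] with z hz
    have hz0 : (0:ℝ) < z := lt_of_lt_of_le one_pos hz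
    have : expInt z ≤ ∫ t in Set.Ioi z, Real.exp (-t) := by
      refine setIntegral_mono_on (integrableOn_exp_div_one hz0) ?_ measurableSet_Ioi ?_
      · have := exp_neg_integrableOn_Ioi z one_pos; simpa using this
      · intro t ht
        have ht1 : 1 ≤ t := hz.trans (le_of_lt ht)
        rw [div_le_iff₀ (by linarith)]
        nlinarith [Real.exp_pos (-t)]
    calc expInt z ≤ ∫ t in Set.Ioi z, Real.exp (-t) := this
      _ = Real.exp (-z) := by
          have := integral_exp_neg_mul_Ioi (c := 1) (s := z) one_pos
          simpa using this
  have hexp : Tendsto (fun z : ℝ => Real.exp (-z)) atTop (𝓝 0) :=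
    Real.tendsto_exp_atBot.comp tendsto_neg_atTop_atBot
  exact tendsto_of_tendsto_of_tendsto_of_le_of_le' tendsto_const_nhds hexp h1 h2

lemma integrableOn_const_exp {c s : ℝ} (hc : 0 < c) :
    IntegrableOn (fun t => c * Real.exp (-(c * t))) (Set.Ioi s) := by
  have := (exp_neg_integrableOn_Ioi s hc).const_mul c
  exact IntegrableOn.congr_fun this (fun x _ => by ring_nf) measurableSet_Ioi

lemma hasDerivAt_exp_neg_mul (a x : ℝ) :
    HasDerivAt (fun x => Real.exp (-(a * x))) (Real.exp (-(a * x)) * -a) x := by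
  have h : HasDerivAt (fun x : ℝ => -(a * x)) (-a) x := by
    exact ((hasDerivAt_id x).const_mul a).neg.congr_deriv (by ring)
  exact h.exp

lemma ibp_expInt {a k s : ℝ} (ha : 0 < a) (hk : 0 < k) (hs : 0 < s) :
    ∫ x in Set.Ioi s,
      (a * Real.exp (-(a * x)) * expInt (k * x) + Real.exp (-((a + k) * x)) / x)
      = Real.exp (-(a * s)) * expInt (k * s) := by
  have hderiv : ∀ x ∈ Set.Ici s, HasDerivAt
      (fun x => -(Real.exp (-(a * x)) * expInt (k * x)))
      (a * Real.exp (-(a * x)) * expInt (k * x) + Real.exp (-((a + k) * x)) / x) x := by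
    intro x hx
    have hx0 : 0 < x := lt_of_lt_of_le hs hx
    have hkx : 0 < k * x := by positivity
    have h2 : HasDerivAt (fun x => expInt (k * x)) (-(Real.exp (-(k * x)) / (k * x)) * k) x := by
      have hmul : HasDerivAt (fun x : ℝ => k * x) k x := by
        simpa using (hasDerivAt_id x).const_mul k
      exact (hasDerivAt_expInt hkx).comp x hmul
    have h := ((hasDerivAt_exp_neg_mul a x).mul h2).neg
    refine h.congr_deriv (Eq.symm ?_)
    have hxne : x ≠ 0 := hx0.ne'
    have hexp : Real.exp (-((a + k) * x)) = Real.exp (-(a * x)) * Real.exp (-(k * x)) := by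
      rw [← Real.exp_add]; ring_nf
    rw [hexp]
    field_simp
    ring
  have hnonneg : ∀ x ∈ Set.Ioi s, 0 ≤
      a * Real.exp (-(a * x)) * expInt (k * x) + Real.exp (-((a + k) * x)) / x := by
    intro x hx
    have hx0 : 0 < x := hs.trans hx
    have := expInt_nonneg (z := k * x) (by positivity)
    positivity
  have htend : Tendsto (fun x => -(Real.exp (-(a * x)) * expInt (k * x))) atTop (𝓝 0) := by
    rw [show (0:ℝ) = -(0 * 0) by ring]
    refine Tendsto.neg (Tendsto.mul ?_ ?_)
    · refine Real.tendsto_exp_atBot.comp ?_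
      simp_rw [← neg_mul]
      exact tendsto_id.const_mul_atTop_of_neg (by linarith)
    · exact tendsto_expInt.comp (tendsto_id.const_mul_atTop hk)
  have h := MeasureTheory.integral_Ioi_of_hasDerivAt_of_nonneg' hderiv hnonneg htend
  rw [h]; ring

lemma integrableOn_ibp_expInt {a k s : ℝ} (ha : 0 < a) (hk : 0 < k) (hs : 0 < s) :
    IntegrableOn (fun x =>
      a * Real.exp (-(a * x)) * expInt (k * x) + Real.exp (-((a + k) * x)) / x)
      (Set.Ioi s) := by
  have hderiv : ∀ x ∈ Set.Ici s, HasDerivAt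
      (fun x => -(Real.exp (-(a * x)) * expInt (k * x)))
      (a * Real.exp (-(a * x)) * expInt (k * x) + Real.exp (-((a + k) * x)) / x) x := by
    intro x hx
    have hx0 : 0 < x := lt_of_lt_of_le hs hx
    have hkx : 0 < k * x := by positivity
    have h2 : HasDerivAt (fun x => expInt (k * x)) (-(Real.exp (-(k * x)) / (k * x)) * k) x := by
      have hmul : HasDerivAt (fun x : ℝ => k * x) k x := by
        simpa using (hasDerivAt_id x).const_mul k
      exact (hasDerivAt_expInt hkx).comp x hmul
    have h := ((hasDerivAt_exp_neg_mul a x).mul h2).neg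
    refine h.congr_deriv (Eq.symm ?_)
    have hxne : x ≠ 0 := hx0.ne'
    have hexp : Real.exp (-((a + k) * x)) = Real.exp (-(a * x)) * Real.exp (-(k * x)) := by
      rw [← Real.exp_add]; ring_nf
    rw [hexp]
    field_simp
    ring
  have hnonneg : ∀ x ∈ Set.Ioi s, 0 ≤
      a * Real.exp (-(a * x)) * expInt (k * x) + Real.exp (-((a + k) * x)) / x := by
    intro x hx
    have hx0 : 0 < x := hs.trans hx
    have := expInt_nonneg (z := k * x) (by positivity)
    positivity
  have htend : Tendsto (fun x => -(Real.exp (-(a * x)) * expInt (k * x))) atTop (𝓝 0) := by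
    rw [show (0:ℝ) = -(0 * 0) by ring]
    refine Tendsto.neg (Tendsto.mul ?_ ?_)
    · refine Real.tendsto_exp_atBot.comp ?_
      simp_rw [← neg_mul]
      exact tendsto_id.const_mul_atTop_of_neg (by linarith)
    · exact tendsto_expInt.comp (tendsto_id.const_mul_atTop hk)
  exact MeasureTheory.integrableOn_Ioi_deriv_of_nonneg' hderiv hnonneg htend


lemma integral_expMeasure {r : ℝ} (hr : 0 < r) (g : ℝ → ℝ) :
    ∫ x, g x ∂(ProbabilityTheory.expMeasure r)
      = ∫ x in Set.Ioi 0, r * Real.exp (-(r * x)) * g x := by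
  have hpdf : ∀ x : ℝ, ProbabilityTheory.exponentialPDFReal r x
      = if 0 ≤ x then r * Real.exp (-(r * x)) else 0 := by
    intro x
    rw [ProbabilityTheory.exponentialPDFReal, ProbabilityTheory.gammaPDFReal]
    simp [Real.rpow_one, Real.Gamma_one]
  have h1 : ProbabilityTheory.expMeasure r
      = volume.withDensity (fun x =>
          ((Real.toNNReal (ProbabilityTheory.exponentialPDFReal r x) : ℝ≥0) : ℝ≥0∞)) := by
    rw [ProbabilityTheory.expMeasure, ProbabilityTheory.gammaMeasure]
    rfl
  rw [h1, integral_withDensity_eq_integral_smul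
    ((ProbabilityTheory.measurable_exponentialPDFReal r).real_toNNReal) g]
  have h2 : ∀ x : ℝ, (Real.toNNReal (ProbabilityTheory.exponentialPDFReal r x) : ℝ≥0) • g x
      = Set.indicator (Set.Ici (0:ℝ)) (fun x => r * Real.exp (-(r * x)) * g x) x := by
    intro x
    rw [NNReal.smul_def, smul_eq_mul, Real.coe_toNNReal _
      (ProbabilityTheory.exponentialPDFReal_nonneg hr x), hpdf]
    by_cases hx : 0 ≤ x
    · rw [if_pos hx, Set.indicator_of_mem (Set.mem_Ici.mpr hx)]
    · rw [if_neg hx, Set.indicator_of_notMem (by simpa using hx), zero_mul]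
  calc ∫ x, (Real.toNNReal (ProbabilityTheory.exponentialPDFReal r x) : ℝ≥0) • g x
      = ∫ x, Set.indicator (Set.Ici (0:ℝ)) (fun x => r * Real.exp (-(r * x)) * g x) x := by
        exact integral_congr_ae (ae_of_all _ h2)
    _ = ∫ x in Set.Ici (0:ℝ), r * Real.exp (-(r * x)) * g x := integral_indicator measurableSet_Ici
    _ = ∫ x in Set.Ioi (0:ℝ), r * Real.exp (-(r * x)) * g x := integral_Ici_eq_integral_Ioi

noncomputable def pf (δ1 δ2 x0 lam2 : ℝ) (p : ℝ × ℝ) : ℝ :=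
  if x0 ≤ p.1 ∧ lam2 ≤ p.2 then max (δ1 / p.2) (δ2 / p.1) else 0

lemma pf_measurable (δ1 δ2 x0 lam2 : ℝ) : Measurable (pf δ1 δ2 x0 lam2) := by
  unfold pf
  refine Measurable.ite ?_ ?_ measurable_const
  · exact (measurableSet_le measurable_const measurable_fst).inter
      (measurableSet_le measurable_const measurable_snd)
  · exact (measurable_const.div measurable_snd).max (measurable_const.div measurable_fst)

lemma pf_nonneg {δ1 δ2 x0 lam2 : ℝ} (hδ1 : 0 < δ1) (hδ2 : 0 < δ2) (hx0 : 0 < x0)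
    (hl : 0 < lam2) (p : ℝ × ℝ) : 0 ≤ pf δ1 δ2 x0 lam2 p := by
  unfold pf
  split_ifs with h
  · have h1 : 0 < p.1 := lt_of_lt_of_le hx0 h.1
    have h2 : 0 < p.2 := lt_of_lt_of_le hl h.2
    positivity
  · exact le_rfl

lemma pf_bound {δ1 δ2 x0 lam2 : ℝ} (hδ1 : 0 < δ1) (hδ2 : 0 < δ2) (hx0 : 0 < x0)
    (hl : 0 < lam2) (p : ℝ × ℝ) : ‖pf δ1 δ2 x0 lam2 p‖ ≤ δ1 / lam2 + δ2 / x0 := by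
  rw [Real.norm_eq_abs, abs_of_nonneg (pf_nonneg hδ1 hδ2 hx0 hl p)]
  unfold pf
  split_ifs with h
  · have h1 : 0 < p.1 := lt_of_lt_of_le hx0 h.1
    have h2 : 0 < p.2 := lt_of_lt_of_le hl h.2
    have e1 : δ1 / p.2 ≤ δ1 / lam2 := by gcongr; exact h.2
    have e2 : δ2 / p.1 ≤ δ2 / x0 := by gcongr; exact h.1
    have : (0:ℝ) ≤ δ2 / x0 := by positivity
    have : (0:ℝ) ≤ δ1 / lam2 := by positivity
    rcases max_cases (δ1 / p.2) (δ2 / p.1) with ⟨hm, _⟩ | ⟨hm, _⟩ <;> rw [hm] <;> linarith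
  · positivity

lemma inner_eval {b δ1 δ2 x0 lam2 x : ℝ} (hb : 0 < b) (hδ1 : 0 < δ1) (hδ2 : 0 < δ2)
    (hx0 : 0 < x0) (hl : 0 < lam2) (hlle : lam2 ≤ δ1 * x0 / δ2) (hx : x0 ≤ x) :
    ∫ y in Set.Ioi (0:ℝ), b * Real.exp (-(b * y)) * pf δ1 δ2 x0 lam2 (x, y)
      = δ1 * b * (expInt (b * lam2) - expInt (b * (δ1 * x / δ2)))
        + δ2 / x * Real.exp (-(b * (δ1 * x / δ2))) := by
  have hxpos : 0 < x := lt_of_lt_of_le hx0 hx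
  set c := δ1 * x / δ2 with hc
  have hlc : lam2 ≤ c := hlle.trans (by rw [hc]; gcongr)
  have hcpos : 0 < c := lt_of_lt_of_le hl hlc
  -- rewrite inner integrand as indicator
  have step1 : ∀ y : ℝ, b * Real.exp (-(b * y)) * pf δ1 δ2 x0 lam2 (x, y)
      = Set.indicator (Set.Ici lam2)
          (fun y => b * Real.exp (-(b * y)) * max (δ1 / y) (δ2 / x)) y := by
    intro y
    unfold pf
    by_cases hy : lam2 ≤ y
    · rw [Set.indicator_of_mem (Set.mem_Ici.mpr hy), if_pos ⟨hx, hy⟩]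
    · rw [Set.indicator_of_notMem (by simpa using hy), if_neg (by tauto), mul_zero]
  rw [setIntegral_congr_fun measurableSet_Ioi (fun y _ => step1 y),
    setIntegral_indicator measurableSet_Ici,
    Set.inter_eq_self_of_subset_right (Set.Ici_subset_Ioi.mpr hl),
    MeasureTheory.integral_Ici_eq_integral_Ioi]
  -- split at c
  have hsplit : Set.Ioi lam2 = Set.Ioc lam2 c ∪ Set.Ioi c := (Set.Ioc_union_Ioi_eq_Ioi hlc).symm
  have hIoc_int : IntegrableOn (fun y => δ1 * b * (Real.exp (-(b * y)) / y)) (Set.Ioc lam2 c) :=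
    (MeasureTheory.IntegrableOn.mono_set
      ((integrableOn_exp_div hb hl).const_mul (δ1 * b)) Set.Ioc_subset_Ioi_self)
  have hIoi_int : IntegrableOn (fun y => δ2 / x * (b * Real.exp (-(b * y)))) (Set.Ioi c) :=
    ((integrableOn_const_exp hb).const_mul (δ2 / x))
  have heq1 : Set.EqOn (fun y => b * Real.exp (-(b * y)) * max (δ1 / y) (δ2 / x))
      (fun y => δ1 * b * (Real.exp (-(b * y)) / y)) (Set.Ioc lam2 c) := by
    intro y hy
    have hy0 : 0 < y := lt_of_lt_of_le hl hy.1.le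
    have hmax : max (δ1 / y) (δ2 / x) = δ1 / y := by
      refine max_eq_left ?_
      rw [div_le_div_iff₀ hxpos hy0]
      have h2 := hy.2
      rw [hc, le_div_iff₀ hδ2] at h2
      linarith
    simp only [hmax]
    field_simp
  have heq2 : Set.EqOn (fun y => b * Real.exp (-(b * y)) * max (δ1 / y) (δ2 / x))
      (fun y => δ2 / x * (b * Real.exp (-(b * y)))) (Set.Ioi c) := by
    intro y hy
    have hy0 : 0 < y := hcpos.trans hy
    have hmax : max (δ1 / y) (δ2 / x) = δ2 / x := by
      refine max_eq_right ?_
      rw [div_le_div_iff₀ hy0 hxpos]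
      have h2 : c < y := hy
      rw [hc, div_lt_iff₀ hδ2] at h2
      linarith
    simp only [hmax]
    ring
  rw [hsplit, setIntegral_union (Set.Ioc_disjoint_Ioi le_rfl) measurableSet_Ioi
    (hIoc_int.congr_fun (fun y hy => (heq1 hy).symm) measurableSet_Ioc)
    (hIoi_int.congr_fun (fun y hy => (heq2 hy).symm) measurableSet_Ioi),
    setIntegral_congr_fun measurableSet_Ioc heq1,
    setIntegral_congr_fun measurableSet_Ioi heq2]
  -- evaluate the two pieces
  have hioc : ∫ y in Set.Ioc lam2 c, δ1 * b * (Real.exp (-(b * y)) / y)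
      = δ1 * b * (expInt (b * lam2) - expInt (b * c)) := by
    have hu : ∫ y in Set.Ioi lam2, δ1 * b * (Real.exp (-(b * y)) / y)
        = (∫ y in Set.Ioc lam2 c, δ1 * b * (Real.exp (-(b * y)) / y))
          + ∫ y in Set.Ioi c, δ1 * b * (Real.exp (-(b * y)) / y) := by
      rw [← setIntegral_union (Set.Ioc_disjoint_Ioi le_rfl) measurableSet_Ioi
        hIoc_int ((integrableOn_exp_div hb hcpos).const_mul (δ1 * b)), ← hsplit]
    have hv1 : ∫ y in Set.Ioi lam2, δ1 * b * (Real.exp (-(b * y)) / y)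
        = δ1 * b * expInt (b * lam2) := by
      rw [MeasureTheory.integral_const_mul, integral_exp_div_Ioi hb hl]
    have hv2 : ∫ y in Set.Ioi c, δ1 * b * (Real.exp (-(b * y)) / y)
        = δ1 * b * expInt (b * c) := by
      rw [MeasureTheory.integral_const_mul, integral_exp_div_Ioi hb hcpos]
    rw [hv1, hv2] at hu
    linarith
  have hioi : ∫ y in Set.Ioi c, δ2 / x * (b * Real.exp (-(b * y)))
      = δ2 / x * Real.exp (-(b * c)) := by
    rw [MeasureTheory.integral_const_mul, integral_exp_neg_mul_Ioi hb]
  rw [hioc, hioi]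

theorem stmt_8 {Ωsp : Type*} [MeasurableSpace Ωsp] (μ : Measure Ωsp)
    [IsProbabilityMeasure μ]
    (X Y : Ωsp → ℝ) (hX : Measurable X) (hY : Measurable Y)
    (hindep : IndepFun X Y μ)
    (ΩX ΩY δ1 δ2 x0 y0 ρ : ℝ)
    (hΩX : 0 < ΩX) (hΩY : 0 < ΩY) (hδ1 : 0 < δ1) (hδ2 : 0 < δ2)
    (hx0 : 0 < x0) (hy0 : 0 < y0) (hρ : 0 < ρ)
    (hreg : δ2 * y0 ≤ δ1 * x0) (hρge : δ2 / x0 ≤ ρ)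
    (hXdist : Measure.map X μ = expMeasure (1 / ΩX))
    (hYdist : Measure.map Y μ = expMeasure (1 / ΩY))
    (lam2 : ℝ) (hlam2 : lam2 = max y0 (δ1 / ρ))
    (Pstar : ℝ → ℝ → ℝ)
    (hPstar : ∀ x y, Pstar x y =
      if x0 ≤ x ∧ y0 ≤ y ∧ max (δ1 / y) (δ2 / x) ≤ ρ
      then max (δ1 / y) (δ2 / x) else 0) :
    ∫ ω, Pstar (X ω) (Y ω) ∂μ =
      (δ1 / ΩY) * expInt (lam2 / ΩY) * Real.exp (-x0 / ΩX)
      - (δ1 / ΩY) * expInt (δ1 * x0 / (δ2 * ΩY)) * Real.exp (-x0 / ΩX)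
      + (δ1 / ΩY) * expInt ((1 / ΩX + δ1 / (δ2 * ΩY)) * x0)
      + (δ2 / ΩX) * expInt ((1 / ΩX + δ1 / (δ2 * ΩY)) * x0) := by
  have ha : 0 < 1 / ΩX := by positivity
  have hb : 0 < 1 / ΩY := by positivity
  haveI i1 : IsProbabilityMeasure (expMeasure (1 / ΩX)) := isProbabilityMeasure_expMeasure ha
  haveI i2 : IsProbabilityMeasure (expMeasure (1 / ΩY)) := isProbabilityMeasure_expMeasure hb
  set k : ℝ := 1 / ΩY * δ1 / δ2 with hkdef
  have hk : 0 < k := by positivity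
  have hak : 0 < 1 / ΩX + k := by positivity
  have hlam2pos : 0 < lam2 := by
    rw [hlam2]; exact lt_of_lt_of_le hy0 (le_max_left _ _)
  have hlam2le : lam2 ≤ δ1 * x0 / δ2 := by
    rw [hlam2]
    refine max_le ?_ ?_
    · rw [le_div_iff₀ hδ2]; linarith
    · rw [div_le_div_iff₀ hρ hδ2]
      have h1 : δ2 ≤ ρ * x0 := by
        rw [div_le_iff₀ hx0] at hρge; linarith
      nlinarith
  have hiff : ∀ x y : ℝ,
      (x0 ≤ x ∧ y0 ≤ y ∧ max (δ1 / y) (δ2 / x) ≤ ρ) ↔ (x0 ≤ x ∧ lam2 ≤ y) := by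
    intro x y
    constructor
    · rintro ⟨hxx, hyy, hm⟩
      refine ⟨hxx, ?_⟩
      rw [hlam2]
      refine max_le hyy ?_
      have hy' : 0 < y := lt_of_lt_of_le hy0 hyy
      have h1 : δ1 / y ≤ ρ := le_trans (le_max_left _ _) hm
      rw [div_le_iff₀ hy'] at h1
      rw [div_le_iff₀ hρ]
      nlinarith
    · rintro ⟨hxx, hyy⟩
      have hxp : 0 < x := lt_of_lt_of_le hx0 hxx
      have hyp : 0 < y := lt_of_lt_of_le hlam2pos hyy
      have hy0y : y0 ≤ y := le_trans (by rw [hlam2]; exact le_max_left _ _) hyy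
      refine ⟨hxx, hy0y, max_le ?_ ?_⟩
      · have h1 : δ1 / ρ ≤ y := le_trans (by rw [hlam2]; exact le_max_right _ _) hyy
        rw [div_le_iff₀ hρ] at h1
        rw [div_le_iff₀ hyp]
        nlinarith
      · rw [div_le_iff₀ hxp]
        rw [div_le_iff₀ hx0] at hρge
        nlinarith
  have hPeq : ∀ ω, Pstar (X ω) (Y ω) = pf δ1 δ2 x0 lam2 (X ω, Y ω) := by
    intro ω
    rw [hPstar, pf]
    exact if_congr (hiff _ _) rfl rfl
  have hpair : AEMeasurable (fun ω => (X ω, Y ω)) μ := (hX.prodMk hY).aemeasurable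
  have hmap : Measure.map (fun ω => (X ω, Y ω)) μ
      = (expMeasure (1 / ΩX)).prod (expMeasure (1 / ΩY)) := by
    rw [← hXdist, ← hYdist]
    exact (ProbabilityTheory.indepFun_iff_map_prod_eq_prod_map_map
      hX.aemeasurable hY.aemeasurable).mp hindep
  have hint : Integrable (pf δ1 δ2 x0 lam2)
      ((expMeasure (1 / ΩX)).prod (expMeasure (1 / ΩY))) := by
    refine (integrable_const (δ1 / lam2 + δ2 / x0)).mono'
      (pf_measurable δ1 δ2 x0 lam2).aestronglyMeasurable ?_
    exact ae_of_all _ (pf_bound hδ1 hδ2 hx0 hlam2pos)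
  -- the simplified inner value
  set φ : ℝ → ℝ := fun x =>
      δ1 * (1 / ΩY) * (expInt (1 / ΩY * lam2) - expInt (1 / ΩY * (δ1 * x / δ2)))
        + δ2 / x * Real.exp (-(1 / ΩY * (δ1 * x / δ2))) with hφ
  set T1 : ℝ → ℝ := fun x =>
      δ1 * (1 / ΩY) * expInt (1 / ΩY * lam2) * (1 / ΩX * Real.exp (-(1 / ΩX * x))) with hT1
  set T2 : ℝ → ℝ := fun x =>
      δ1 * (1 / ΩY) * (1 / ΩX * Real.exp (-(1 / ΩX * x)) * expInt (k * x)) with hT2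
  set T3 : ℝ → ℝ := fun x =>
      δ2 * (1 / ΩX) * (Real.exp (-((1 / ΩX + k) * x)) / x) with hT3
  have hT1i : IntegrableOn T1 (Set.Ioi x0) :=
    (integrableOn_const_exp ha).const_mul _
  have hT3i : IntegrableOn T3 (Set.Ioi x0) :=
    (integrableOn_exp_div hak hx0).const_mul _
  have hT2i : IntegrableOn T2 (Set.Ioi x0) := by
    refine MeasureTheory.IntegrableOn.congr_fun
      (((integrableOn_ibp_expInt ha hk hx0).sub
        (integrableOn_exp_div hak hx0)).const_mul (δ1 * (1 / ΩY)))
      (fun x _ => by simp only [Pi.sub_apply, hT2]; ring) measurableSet_Ioi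
  calc ∫ ω, Pstar (X ω) (Y ω) ∂μ
      = ∫ ω, pf δ1 δ2 x0 lam2 (X ω, Y ω) ∂μ := by
        exact integral_congr_ae (ae_of_all _ hPeq)
    _ = ∫ p, pf δ1 δ2 x0 lam2 p ∂(Measure.map (fun ω => (X ω, Y ω)) μ) :=
        (integral_map hpair (pf_measurable δ1 δ2 x0 lam2).aestronglyMeasurable).symm
    _ = ∫ p, pf δ1 δ2 x0 lam2 p ∂((expMeasure (1 / ΩX)).prod (expMeasure (1 / ΩY))) := by
        rw [hmap]
    _ = ∫ x, ∫ y, pf δ1 δ2 x0 lam2 (x, y) ∂(expMeasure (1 / ΩY)) ∂(expMeasure (1 / ΩX)) :=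
        MeasureTheory.integral_prod _ hint
    _ = ∫ x in Set.Ioi (0:ℝ), 1 / ΩX * Real.exp (-(1 / ΩX * x))
          * ∫ y, pf δ1 δ2 x0 lam2 (x, y) ∂(expMeasure (1 / ΩY)) :=
        integral_expMeasure ha _
    _ = ∫ x in Set.Ioi (0:ℝ), 1 / ΩX * Real.exp (-(1 / ΩX * x))
          * ∫ y in Set.Ioi (0:ℝ), 1 / ΩY * Real.exp (-(1 / ΩY * y))
            * pf δ1 δ2 x0 lam2 (x, y) := by
        refine setIntegral_congr_fun measurableSet_Ioi fun x _ => ?_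
        rw [integral_expMeasure hb]
    _ = ∫ x in Set.Ioi (0:ℝ), Set.indicator (Set.Ici x0)
          (fun x => 1 / ΩX * Real.exp (-(1 / ΩX * x)) * φ x) x := by
        refine setIntegral_congr_fun measurableSet_Ioi fun x hxm => ?_
        by_cases hxx : x0 ≤ x
        · rw [inner_eval hb hδ1 hδ2 hx0 hlam2pos hlam2le hxx,
            Set.indicator_of_mem (Set.mem_Ici.mpr hxx), hφ]
        · have hz : ∀ y : ℝ, pf δ1 δ2 x0 lam2 (x, y) = 0 := by
            intro y; rw [pf]; exact if_neg (by tauto)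
          rw [Set.indicator_of_notMem (by simpa using hxx)]
          simp [hz]
    _ = ∫ x in Set.Ioi x0, 1 / ΩX * Real.exp (-(1 / ΩX * x)) * φ x := by
        rw [setIntegral_indicator measurableSet_Ici,
          Set.inter_eq_self_of_subset_right (Set.Ici_subset_Ioi.mpr hx0),
          MeasureTheory.integral_Ici_eq_integral_Ioi]
    _ = ∫ x in Set.Ioi x0, (T1 x - T2 x + T3 x) := by
        refine setIntegral_congr_fun measurableSet_Ioi fun x hxm => ?_
        have hxp : 0 < x := hx0.trans hxm
        have harg : 1 / ΩY * (δ1 * x / δ2) = k * x := by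
          rw [hkdef]; ring
        have hexp : Real.exp (-((1 / ΩX + k) * x))
            = Real.exp (-(1 / ΩX * x)) * Real.exp (-(k * x)) := by
          rw [← Real.exp_add]; ring_nf
        simp only [hφ, hT1, hT2, hT3]
        rw [harg, hexp]
        field_simp
    _ = (∫ x in Set.Ioi x0, T1 x) - (∫ x in Set.Ioi x0, T2 x)
          + (∫ x in Set.Ioi x0, T3 x) := by
        have h1 : ∫ x in Set.Ioi x0, (T1 x - T2 x + T3 x)
            = (∫ x in Set.Ioi x0, (T1 x - T2 x)) + ∫ x in Set.Ioi x0, T3 x :=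
          MeasureTheory.integral_add (hT1i.sub hT2i) hT3i
        have h2 : ∫ x in Set.Ioi x0, (T1 x - T2 x)
            = (∫ x in Set.Ioi x0, T1 x) - ∫ x in Set.Ioi x0, T2 x :=
          MeasureTheory.integral_sub hT1i hT2i
        rw [h1, h2]
    _ = (δ1 / ΩY) * expInt (lam2 / ΩY) * Real.exp (-x0 / ΩX)
        - (δ1 / ΩY) * expInt (δ1 * x0 / (δ2 * ΩY)) * Real.exp (-x0 / ΩX)
        + (δ1 / ΩY) * expInt ((1 / ΩX + δ1 / (δ2 * ΩY)) * x0)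
        + (δ2 / ΩX) * expInt ((1 / ΩX + δ1 / (δ2 * ΩY)) * x0) := by
        have hv1 : ∫ x in Set.Ioi x0, T1 x
            = δ1 * (1 / ΩY) * expInt (1 / ΩY * lam2) * Real.exp (-(1 / ΩX * x0)) := by
          simp only [hT1]
          rw [MeasureTheory.integral_const_mul, integral_exp_neg_mul_Ioi ha]
        have hv3 : ∫ x in Set.Ioi x0, T3 x
            = δ2 * (1 / ΩX) * expInt ((1 / ΩX + k) * x0) := by
          simp only [hT3]
          rw [MeasureTheory.integral_const_mul, integral_exp_div_Ioi hak hx0]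
        have hv2 : ∫ x in Set.Ioi x0, T2 x
            = δ1 * (1 / ΩY) * (Real.exp (-(1 / ΩX * x0)) * expInt (k * x0)
              - expInt ((1 / ΩX + k) * x0)) := by
          simp only [hT2]
          rw [MeasureTheory.integral_const_mul]
          have hstep : ∫ x in Set.Ioi x0, 1 / ΩX * Real.exp (-(1 / ΩX * x)) * expInt (k * x)
              = ∫ x in Set.Ioi x0,
                ((1 / ΩX * Real.exp (-(1 / ΩX * x)) * expInt (k * x)
                  + Real.exp (-((1 / ΩX + k) * x)) / x)
                 - Real.exp (-((1 / ΩX + k) * x)) / x) := by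
            refine setIntegral_congr_fun measurableSet_Ioi fun x _ => ?_
            ring
          have hsub : ∫ x in Set.Ioi x0,
              ((1 / ΩX * Real.exp (-(1 / ΩX * x)) * expInt (k * x)
                  + Real.exp (-((1 / ΩX + k) * x)) / x)
                - Real.exp (-((1 / ΩX + k) * x)) / x)
              = (∫ x in Set.Ioi x0, (1 / ΩX * Real.exp (-(1 / ΩX * x)) * expInt (k * x)
                  + Real.exp (-((1 / ΩX + k) * x)) / x))
                - ∫ x in Set.Ioi x0, Real.exp (-((1 / ΩX + k) * x)) / x :=
            MeasureTheory.integral_sub (integrableOn_ibp_expInt ha hk hx0)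
              (integrableOn_exp_div hak hx0)
          rw [hstep, hsub, ibp_expInt ha hk hx0, integral_exp_div_Ioi hak hx0]
        rw [hv1, hv2, hv3]
        have e1 : 1 / ΩY * lam2 = lam2 / ΩY := by ring
        have e2 : k * x0 = δ1 * x0 / (δ2 * ΩY) := by rw [hkdef]; field_simp
        have e3 : (1 / ΩX + k) * x0 = (1 / ΩX + δ1 / (δ2 * ΩY)) * x0 := by
          rw [hkdef]; field_simp
        have e4 : -(1 / ΩX * x0) = -x0 / ΩX := by ring
        rw [e1, e2, e3, e4]
        ring
end

section
/- Let X and Y be independent exponentially distributed random variables with means Ω_X > 0 and Ω_Y > 0, let δ1, δ2, x0, y0, ρ > 0 with δ2·y0 ≤ δ1·x0 and ρ ≥ δ2/x0, and set λ1 = max{x0, δ2/ρ} and λ2 = max{y0, δ1/ρ}. Then the system outage probability, i.e., the probability of the complement of the event {X ≥ x0, Y ≥ y0, max{δ1/Y, δ2/X} ≤ ρ}, equals 1 − e^{−x0/Ω_X}·e^{−λ2/Ω_Y} − e^{−λ1·(1/Ω_X + δ1/(δ2·Ω_Y))} + (δ2·Ω_Y/(δ1·Ω_X + δ2·Ω_Y))·e^{−x0·(1/Ω_X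 + δ1/(δ2·Ω_Y))} + (δ1·Ω_X/(δ1·Ω_X + δ2·Ω_Y))·e^{−λ1·(1/Ω_X + δ1/(δ2·Ω_Y))}. -/
open MeasureTheory ProbabilityTheory

lemma expMeasure_Iic' {r t : ℝ} (hr : 0 < r) :
    expMeasure r (Set.Iic t) =
      ENNReal.ofReal (if 0 ≤ t then 1 - Real.exp (-(r * t)) else 0) := by
  rw [expMeasure, gammaMeasure, withDensity_apply _ measurableSet_Iic]
  have hpdf : gammaPDF 1 r = exponentialPDF r := by
    funext x; rw [gammaPDF, exponentialPDF, exponentialPDFReal]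
  rw [hpdf, lintegral_exponentialPDF_eq_antiDeriv hr]

lemma expMeasure_Ici {r t : ℝ} (hr : 0 < r) (ht : 0 ≤ t) :
    expMeasure r (Set.Ici t) = ENNReal.ofReal (Real.exp (-(r * t))) := by
  have hprob : IsProbabilityMeasure (expMeasure r) := isProbabilityMeasure_expMeasure hr
  have hsingle : expMeasure r {t} = 0 := by
    rw [expMeasure, gammaMeasure, withDensity_apply _ (measurableSet_singleton t)]
    rw [Measure.restrict_eq_zero.2 (by simp), lintegral_zero_measure]
  have hIio : expMeasure r (Set.Iio t) = ENNReal.ofReal (1 - Real.exp (-(r * t))) := by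
    have h1 : Set.Iic t = Set.Iio t ∪ {t} := by
      ext x; simp [le_iff_lt_or_eq]
    have h2 := expMeasure_Iic' (t := t) hr
    rw [if_pos ht] at h2
    rw [h1, measure_union (by simp) (measurableSet_singleton t), hsingle, add_zero] at h2
    exact h2
  have hc : Set.Ici t = (Set.Iio t)ᶜ := by simp
  have hle : Real.exp (-(r * t)) ≤ 1 := Real.exp_le_one_iff.2 (by nlinarith)
  rw [hc, measure_compl measurableSet_Iio (measure_ne_top _ _), hIio, measure_univ]
  rw [← ENNReal.ofReal_one, ← ENNReal.ofReal_sub _ (by linarith)]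
  congr 1
  ring_nf

/-- closed-form system outage probability for the regime
`δ2 y0 ≤ δ1 x0`, `ρ ≥ δ2/x0`, with `λ1 = max x0 (δ2/ρ)`, `λ2 = max y0 (δ1/ρ)`. -/
theorem stmt_13 {Ωsp : Type*} [MeasurableSpace Ωsp] (μ : Measure Ωsp)
    [IsProbabilityMeasure μ]
    (X Y : Ωsp → ℝ) (hX : Measurable X) (hY : Measurable Y)
    (hindep : IndepFun X Y μ)
    (ΩX ΩY δ1 δ2 x0 y0 ρ : ℝ)
    (hΩX : 0 < ΩX) (hΩY : 0 < ΩY) (hδ1 : 0 < δ1) (hδ2 : 0 < δ2)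
    (hx0 : 0 < x0) (hy0 : 0 < y0) (hρ : 0 < ρ)
    (hreg : δ2 * y0 ≤ δ1 * x0) (hρge : δ2 / x0 ≤ ρ)
    (hXdist : Measure.map X μ = expMeasure (1 / ΩX))
    (hYdist : Measure.map Y μ = expMeasure (1 / ΩY))
    (lam1 lam2 : ℝ) (hlam1 : lam1 = max x0 (δ2 / ρ)) (hlam2 : lam2 = max y0 (δ1 / ρ)) :
    μ {ω | x0 ≤ X ω ∧ y0 ≤ Y ω ∧ max (δ1 / Y ω) (δ2 / X ω) ≤ ρ}ᶜ =
      ENNReal.ofReal (1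
        - Real.exp (-x0 / ΩX) * Real.exp (-lam2 / ΩY)
        - Real.exp (-lam1 * (1 / ΩX + δ1 / (δ2 * ΩY)))
        + (δ2 * ΩY / (δ1 * ΩX + δ2 * ΩY)) * Real.exp (-x0 * (1 / ΩX + δ1 / (δ2 * ΩY)))
        + (δ1 * ΩX / (δ1 * ΩX + δ2 * ΩY)) *
            Real.exp (-lam1 * (1 / ΩX + δ1 / (δ2 * ΩY)))) := by
  -- lam1 = x0
  have hlam1x : lam1 = x0 := by
    rw [hlam1, max_eq_left]
    rw [div_le_iff₀ hρ]
    rw [div_le_iff₀ hx0] at hρge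
    nlinarith
  have hlam2y : y0 ≤ lam2 := hlam2 ▸ le_max_left _ _
  have hlam2pos : 0 < lam2 := lt_of_lt_of_le hy0 hlam2y
  -- rewrite the event
  have hset : {ω | x0 ≤ X ω ∧ y0 ≤ Y ω ∧ max (δ1 / Y ω) (δ2 / X ω) ≤ ρ} =
      X ⁻¹' Set.Ici x0 ∩ Y ⁻¹' Set.Ici lam2 := by
    ext ω
    simp only [Set.mem_setOf_eq, Set.mem_inter_iff, Set.mem_preimage, Set.mem_Ici,
      max_le_iff]
    constructor
    · rintro ⟨h1, h2, h3, h4⟩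
      refine ⟨h1, ?_⟩
      have hYpos : 0 < Y ω := lt_of_lt_of_le hy0 h2
      rw [div_le_iff₀ hYpos] at h3
      rw [hlam2, max_le_iff]
      exact ⟨h2, by rw [div_le_iff₀ hρ]; nlinarith⟩
    · rintro ⟨h1, h2⟩
      have hXpos : 0 < X ω := lt_of_lt_of_le hx0 h1
      have hYpos : 0 < Y ω := lt_of_lt_of_le hlam2pos h2
      have h2' : δ1 / ρ ≤ Y ω := le_trans (hlam2 ▸ le_max_right _ _) h2
      refine ⟨h1, le_trans hlam2y h2, ?_, ?_⟩
      · rw [div_le_iff₀ hYpos]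
        rw [div_le_iff₀ hρ] at h2'
        nlinarith
      · rw [div_le_iff₀ hXpos]
        rw [div_le_iff₀ hx0] at hρge
        nlinarith
  rw [hset]
  have hrX : 0 < 1 / ΩX := by positivity
  have hrY : 0 < 1 / ΩY := by positivity
  -- independence
  have hmul : μ (X ⁻¹' Set.Ici x0 ∩ Y ⁻¹' Set.Ici lam2)
      = μ (X ⁻¹' Set.Ici x0) * μ (Y ⁻¹' Set.Ici lam2) :=
    hindep.measure_inter_preimage_eq_mul _ _ measurableSet_Ici measurableSet_Ici
  have hXm : μ (X ⁻¹' Set.Ici x0) = ENNReal.ofReal (Real.exp (-x0 / ΩX)) := by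
    rw [← Measure.map_apply hX measurableSet_Ici, hXdist, expMeasure_Ici hrX hx0.le]
    congr 1
    ring_nf
  have hYm : μ (Y ⁻¹' Set.Ici lam2) = ENNReal.ofReal (Real.exp (-lam2 / ΩY)) := by
    rw [← Measure.map_apply hY measurableSet_Ici, hYdist, expMeasure_Ici hrY hlam2pos.le]
    congr 1
    ring_nf
  have hexp1 : (0:ℝ) ≤ Real.exp (-x0 / ΩX) := (Real.exp_pos _).le
  have hexp2 : (0:ℝ) ≤ Real.exp (-lam2 / ΩY) := (Real.exp_pos _).le
  have hle1 : Real.exp (-x0 / ΩX) ≤ 1 := Real.exp_le_one_iff.2 (by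
    rw [div_nonpos_iff]; right; exact ⟨by linarith, hΩX.le⟩)
  have hle2 : Real.exp (-lam2 / ΩY) ≤ 1 := Real.exp_le_one_iff.2 (by
    rw [div_nonpos_iff]; right; exact ⟨by linarith, hΩY.le⟩)
  rw [measure_compl ((hX measurableSet_Ici).inter (hY measurableSet_Ici))
    (measure_ne_top _ _), measure_univ, hmul, hXm, hYm,
    ← ENNReal.ofReal_mul hexp1, ← ENNReal.ofReal_one,
    ← ENNReal.ofReal_sub _ (by positivity)]
  congr 1
  -- real arithmetic
  have hD : 0 < δ1 * ΩX + δ2 * ΩY := by positivity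
  have hc : δ2 * ΩY / (δ1 * ΩX + δ2 * ΩY) + δ1 * ΩX / (δ1 * ΩX + δ2 * ΩY) = 1 := by
    field_simp
    ring
  rw [hlam1x]
  set E := Real.exp (-x0 * (1 / ΩX + δ1 / (δ2 * ΩY))) with hE
  linarith [mul_comm E (δ2 * ΩY / (δ1 * ΩX + δ2 * ΩY)),
    congrArg (· * E) hc]
end
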